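/- The dynamic programming recurrence correctly computes f_i(v): for i = 1, f_1(v) equals ∞ if v is white, 0 if v is red, and min over red vertices u of δ(u,v) if v is blue; for i ≥ 2, f_i(v) equals ∞ if v is white, min over edges (u,v) of (f_{i−1}(u) + x_u) if v is red, and min over red u of (f_i(u) + δ(u,v)) if v is blue. Here δ(u,v) is the minimum of x_u + x_{v₂} + ⋯ + x_{v_{k−1}} over paths u v₂ … v_{k−1} v with all internal vertices v₂,…,v_{k−1} blue. -/

import Mathlib

open scoped ENNReal

/-- Colors of vertices in the circuit DAG. -/
inductive Color where
  | white | blue | red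
deriving DecidableEq

variable {V : Type*}

/-- Number of red vertices on a path (given as a list of vertices). -/
def redCount (color : V → Color) (p : List V) : ℕ :=
  (p.filter (fun v => decide (color v = Color.red))).length

/-- Length of a path: the sum of the weights of its non-final vertices. -/
noncomputable def plen (x : V → ℝ≥0∞) (p : List V) : ℝ≥0∞ :=
  (p.dropLast.map x).sum

/-- `p` is a `(v,i)`-interesting path: it starts at a red vertex, ends at `v`, and
traverses exactly `i` red vertices. -/
def VIPath (E : V → V → Prop) (color : V → Color) (v : V) (i : ℕ) (p : List V) : Prop :=
  ∃ hp : p ≠ [], p.Chain' E ∧ color (p.head hp) = Color.red ∧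
    p.getLast hp = v ∧ redCount color p = i

/-- `p` is an interesting path: it starts and ends at red vertices and traverses exactly
`L+1` red vertices. -/
def IntPath (E : V → V → Prop) (color : V → Color) (L : ℕ) (p : List V) : Prop :=
  ∃ hp : p ≠ [], p.Chain' E ∧ color (p.head hp) = Color.red ∧
    color (p.getLast hp) = Color.red ∧ redCount color p = L + 1

/-- `f_i(v)`: the minimum length of a `(v,i)`-interesting path (`∞` if none exists). -/
noncomputable def fval (E : V → V → Prop) (color : V → Color) (x : V → ℝ≥0∞)
    (v : V) (i : ℕ) : ℝ≥0∞ :=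
  sInf (plen x '' {p : List V | VIPath E color v i p})

/-- `δ(u,w)`: the minimum of `x_u + x_{v₂} + ⋯ + x_{v_{k−1}}` over paths `u v₂ … v_{k−1} w`
whose internal vertices `v₂,…,v_{k−1}` are all blue (`∞` if none exists). -/
noncomputable def deltaW (E : V → V → Prop) (color : V → Color) (x : V → ℝ≥0∞)
    (u w : V) : ℝ≥0∞ :=
  sInf (plen x '' {p : List V | ∃ hp : p ≠ [], p.Chain' E ∧ p.head hp = u ∧
    p.getLast hp = w ∧ 2 ≤ p.length ∧ ∀ z ∈ (p.drop 1).dropLast, color z = Color.blue})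

section Stmt8Aux

variable {V : Type*} {E : V → V → Prop} {color : V → Color} {x : V → ℝ≥0∞}

/-- Paths counted in `deltaW`. -/
def DPath (E : V → V → Prop) (color : V → Color) (u w : V) (p : List V) : Prop :=
  ∃ hp : p ≠ [], p.Chain' E ∧ p.head hp = u ∧ p.getLast hp = w ∧ 2 ≤ p.length ∧
    ∀ z ∈ (p.drop 1).dropLast, color z = Color.blue

lemma deltaW_eq (u w : V) :
    deltaW E color x u w = sInf (plen x '' {p : List V | DPath E color u w p}) := rfl

lemma aux_le_sInf_add {A : Set ℝ≥0∞} {c d : ℝ≥0∞} (h : ∀ a ∈ A, d ≤ a + c) :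
    d ≤ sInf A + c := by
  rcases A.eq_empty_or_nonempty with rfl | _
  · simp
  · rw [ENNReal.sInf_add]; exact le_iInf₂ h

lemma aux_le_add_sInf {B : Set ℝ≥0∞} {c d : ℝ≥0∞} (h : ∀ b ∈ B, d ≤ c + b) :
    d ≤ c + sInf B := by
  rw [add_comm]
  exact aux_le_sInf_add fun b hb => by rw [add_comm]; exact h b hb

lemma redCount_append (p q : List V) :
    redCount color (p ++ q) = redCount color p + redCount color q := by
  simp [redCount, List.filter_append]

lemma plen_concat (q : List V) (v : V) : plen x (q ++ [v]) = (q.map x).sum := by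
  simp [plen]

lemma sum_map_eq_plen_add (q : List V) (h : q ≠ []) :
    (q.map x).sum = plen x q + x (q.getLast h) := by
  conv_lhs => rw [← List.dropLast_append_getLast h]
  simp [plen]

lemma fval_le {v : V} {i : ℕ} {p : List V} (hp : VIPath E color v i p) :
    fval E color x v i ≤ plen x p :=
  sInf_le ⟨p, hp, rfl⟩

lemma deltaW_le {u w : V} {p : List V} (hp : DPath E color u w p) :
    deltaW E color x u w ≤ plen x p :=
  sInf_le ⟨p, hp, rfl⟩

lemma single_of_dropLast_nil {p : List V} (hne : p ≠ []) (h : p.dropLast = []) :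
    ∃ a, p = [a] := by
  have h0 : p.dropLast.length = p.length - 1 := List.length_dropLast
  have h1 : 0 < p.length := List.length_pos_iff.mpr hne
  rw [h] at h0
  exact List.length_eq_one_iff.mp (by simp at h0; omega)

lemma not_VIPath_white (hwhite : ∀ v u : V, color v = Color.white → ¬ E u v)
    {v : V} {i : ℕ} {p : List V} (hv : color v = Color.white) :
    ¬ VIPath E color v i p := by
  rintro ⟨hne, hch, hhead, hlast, _⟩
  rcases eq_or_ne p.dropLast [] with h | h
  · obtain ⟨a, rfl⟩ := single_of_dropLast_nil hne h
    simp only [List.head_cons, List.getLast_singleton] at hhead hlast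
    rw [hlast, hv] at hhead
    cases hhead
  · have hdecomp : p = p.dropLast ++ [v] := by
      conv_lhs => rw [← List.dropLast_append_getLast hne, hlast]
    rw [hdecomp] at hch
    obtain ⟨-, -, hE⟩ := List.isChain_append.mp hch
    exact hwhite v _ hv (hE _ (List.getLast?_eq_getLast h) v rfl)

lemma fval_white (hwhite : ∀ v u : V, color v = Color.white → ¬ E u v)
    {v : V} {i : ℕ} (hv : color v = Color.white) :
    fval E color x v i = ⊤ := by
  have hset : {p : List V | VIPath E color v i p} = ∅ :=
    Set.eq_empty_iff_forall_notMem.mpr fun p hp => not_VIPath_white hwhite hv hp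
  rw [fval, hset]
  simp

lemma fval_red_one {v : V} (hv : color v = Color.red) :
    fval E color x v 1 = 0 := by
  refine le_antisymm ?_ zero_le
  have h : VIPath E color v 1 [v] :=
    ⟨by simp, List.isChain_singleton v, by simpa using hv, by simp, by simp [redCount, hv]⟩
  simpa [plen] using fval_le (x := x) h

lemma decomp {v : V} {i : ℕ} {p : List V} (hp : VIPath E color v i p)
    (hq : p.dropLast ≠ []) :
    ∃ j, j + redCount color [v] = i ∧
      E (p.dropLast.getLast hq) v ∧
      VIPath E color (p.dropLast.getLast hq) j p.dropLast ∧
      plen x p = plen x p.dropLast + x (p.dropLast.getLast hq) := by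
  obtain ⟨hne, hch, hhead, hlast, hcount⟩ := hp
  have hdecomp : p = p.dropLast ++ [v] := by
    conv_lhs => rw [← List.dropLast_append_getLast hne, hlast]
  refine ⟨redCount color p.dropLast, ?_, ?_, ⟨hq, ?_, ?_, rfl, rfl⟩, ?_⟩
  · rw [← hcount]
    conv_rhs => rw [hdecomp]
    rw [redCount_append]
  · rw [hdecomp] at hch
    obtain ⟨-, -, hE⟩ := List.isChain_append.mp hch
    exact hE _ (List.getLast?_eq_getLast hq) v rfl
  · rw [hdecomp] at hch
    exact (List.isChain_append.mp hch).1
  · have hh : p.dropLast.head? = p.head? := by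
      conv_rhs => rw [hdecomp]
      exact (List.head?_append_of_ne_nil _ hq).symm
    rw [List.head?_eq_head hq, List.head?_eq_head hne, Option.some_inj] at hh
    rw [hh]
    exact hhead
  · conv_lhs => rw [hdecomp]
    rw [plen_concat, sum_map_eq_plen_add p.dropLast hq]

lemma compose_one {u v : V} {j : ℕ} {q : List V} (hq : VIPath E color u j q)
    (hE : E u v) :
    VIPath E color v (j + redCount color [v]) (q ++ [v]) ∧
    plen x (q ++ [v]) = plen x q + x u := by
  obtain ⟨hne, hch, hhead, hlast, hcount⟩ := hq
  refine ⟨⟨by simp, ?_, ?_, ?_, ?_⟩, ?_⟩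
  · refine List.isChain_append.mpr ⟨hch, List.isChain_singleton v, ?_⟩
    intro a ha b hb
    rw [List.getLast?_eq_getLast hne] at ha
    simp only [Option.mem_def, Option.some_inj, List.head?_cons] at ha hb
    rw [← ha, ← hb, hlast]
    exact hE
  · rw [List.head_append_of_ne_nil hne]
    exact hhead
  · simp
  · rw [redCount_append, hcount]
  · rw [plen_concat, sum_map_eq_plen_add q hne, hlast]

lemma compose_delta {u v : V} {i : ℕ} {q r : List V} (hq : VIPath E color u i q)
    (hr : DPath E color u v r) (hv : color v = Color.blue) :
    VIPath E color v i (q ++ r.tail) ∧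
    plen x (q ++ r.tail) = plen x q + plen x r := by
  obtain ⟨hqne, hqch, hqhead, hqlast, hqcount⟩ := hq
  obtain ⟨hrne, hrch, hrhead, hrlast, hrlen, hrblue⟩ := hr
  have hrtail : r.tail ≠ [] := by
    refine List.length_pos_iff.mp ?_
    rw [List.length_tail]
    omega
  have hrcons : r = u :: r.tail := by
    have h := List.cons_head_tail hrne
    rw [hrhead] at h
    exact h.symm
  have htlast : r.tail.getLast hrtail = v := by
    rw [List.getLast_tail hrtail]
    exact hrlast
  have htblue : ∀ z ∈ r.tail, color z = Color.blue := by
    intro z hz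
    rw [← List.dropLast_append_getLast hrtail] at hz
    rcases List.mem_append.mp hz with hz | hz
    · rw [← List.drop_one] at hz
      exact hrblue z hz
    · simp only [List.mem_singleton] at hz
      rw [hz, htlast]
      exact hv
  refine ⟨⟨by simp [hqne], ?_, ?_, ?_, ?_⟩, ?_⟩
  · refine List.isChain_append.mpr ⟨hqch, ?_, ?_⟩
    · rw [hrcons] at hrch
      exact (List.isChain_cons.mp hrch).2
    · intro a ha b hb
      rw [List.getLast?_eq_getLast hqne] at ha
      simp only [Option.mem_def, Option.some_inj] at ha
      rw [← ha, hqlast]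
      rw [hrcons] at hrch
      exact (List.isChain_cons.mp hrch).1 b hb
  · rw [List.head_append_of_ne_nil hqne]
    exact hqhead
  · rw [List.getLast_append_of_ne_nil _ hrtail]
    exact htlast
  · rw [redCount_append, hqcount]
    have : redCount color r.tail = 0 := by
      simp only [redCount, List.length_eq_zero_iff, List.filter_eq_nil_iff]
      intro a ha
      simp [htblue a ha]
    rw [this]
    omega
  · have h1 : (q ++ r.tail).dropLast = q ++ r.tail.dropLast :=
      List.dropLast_append_of_ne_nil hrtail
    have h2 : r.dropLast = u :: r.tail.dropLast := by
      conv_lhs => rw [hrcons]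
      rw [show u :: r.tail = [u] ++ r.tail from rfl]
      rw [List.dropLast_append_of_ne_nil (l' := [u]) hrtail]
      rfl
    rw [plen, h1, List.map_append, List.sum_append, plen, plen, h2]
    rw [sum_map_eq_plen_add q hqne, hqlast]
    simp [plen, add_assoc]

lemma deltaW_le_x {u w : V} (hE : E u w) : deltaW E color x u w ≤ x u := by
  have h : DPath E color u w [u, w] :=
    ⟨by simp, List.isChain_pair.mpr hE, rfl, by simp, by simp, by simp⟩
  simpa [plen] using deltaW_le (x := x) h

lemma deltaW_step {u u' w : V} (hE : E u' w) (hu' : color u' = Color.blue) :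
    deltaW E color x u w ≤ deltaW E color x u u' + x u' := by
  conv_rhs => rw [deltaW_eq]
  apply aux_le_sInf_add
  rintro a ⟨r, hr, rfl⟩
  obtain ⟨hrne, hrch, hrhead, hrlast, hrlen, hrblue⟩ := hr
  have hDP : DPath E color u w (r ++ [w]) := by
    refine ⟨by simp, ?_, ?_, by simp, ?_, ?_⟩
    · refine List.isChain_append.mpr ⟨hrch, List.isChain_singleton w, ?_⟩
      intro a ha b hb
      rw [List.getLast?_eq_getLast hrne] at ha
      simp only [Option.mem_def, Option.some_inj, List.head?_cons] at ha hb
      rw [← ha, ← hb, hrlast]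
      exact hE
    · rw [List.head_append_of_ne_nil hrne]
      exact hrhead
    · simp; omega
    · have hd : (r ++ [w]).drop 1 = r.drop 1 ++ [w] :=
        List.drop_append_of_le_length (by omega)
      rw [hd, List.dropLast_concat]
      intro z hz
      have hrt : r.drop 1 ≠ [] := by
        refine List.length_pos_iff.mp ?_
        rw [List.length_drop]
        omega
      rw [← List.dropLast_append_getLast hrt] at hz
      rcases List.mem_append.mp hz with hz | hz
      · exact hrblue z hz
      · simp only [List.mem_singleton] at hz
        have hgl : (r.drop 1).getLast hrt = u' := by
          simp only [List.drop_one, List.getLast_tail]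
          exact hrlast
        rw [hz, hgl]
        exact hu'
  have h := deltaW_le (x := x) hDP
  rwa [plen_concat, sum_map_eq_plen_add r hrne, hrlast] at h

lemma fval_red (hwhite : ∀ v u : V, color v = Color.white → ¬ E u v)
    {v : V} {i : ℕ} (hv : color v = Color.red) (hi : 2 ≤ i) :
    fval E color x v i =
      ⨅ u : {u : V // E u v}, (fval E color x (u : V) (i - 1) + x (u : V)) := by
  have hrc : redCount color [v] = 1 := by simp [redCount, hv]
  apply le_antisymm
  · refine le_iInf ?_
    rintro ⟨u, hE⟩
    conv_rhs => rw [fval]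
    apply aux_le_sInf_add
    rintro a ⟨q, hq, rfl⟩
    obtain ⟨hvip, hplen⟩ := compose_one (x := x) hq hE
    rw [hrc] at hvip
    have : i - 1 + 1 = i := by omega
    rw [this] at hvip
    rw [← hplen]
    exact fval_le hvip
  · refine le_sInf ?_
    rintro a ⟨p, hp, rfl⟩
    have hdne : p.dropLast ≠ [] := by
      intro h
      obtain ⟨b, rfl⟩ := single_of_dropLast_nil hp.choose h
      obtain ⟨h1x, h2x, h3x, h4x, hcount⟩ := hp
      have : redCount color [b] ≤ 1 := by
        simp only [redCount]
        have := List.length_filter_le (fun v => decide (color v = Color.red)) [b]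
        simpa using this
      omega
    obtain ⟨j, hj, hE, hvip, hplen⟩ := decomp (x := x) hp hdne
    rw [hrc] at hj
    have hj' : j = i - 1 := by omega
    rw [hplen]
    refine iInf_le_of_le ⟨_, hE⟩ ?_
    exact add_le_add_left (by rw [← hj']; exact fval_le hvip) _

lemma blue_ge (hwhite : ∀ v u : V, color v = Color.white → ¬ E u v) {i : ℕ} :
    ∀ n (v : V), color v = Color.blue → ∀ p : List V, p.length ≤ n →
      VIPath E color v i p →
      (⨅ u : {u : V // color u = Color.red},
        (fval E color x (u : V) i + deltaW E color x (u : V) v)) ≤ plen x p := by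
  intro n
  induction n with
  | zero =>
    intro v hv p hlen hp
    exact absurd (List.length_eq_zero_iff.mp (Nat.le_zero.mp hlen)) hp.choose
  | succ n ih =>
    intro v hv p hlen hp
    have hne : p ≠ [] := hp.choose
    have hdne : p.dropLast ≠ [] := by
      intro h
      obtain ⟨a, rfl⟩ := single_of_dropLast_nil hne h
      obtain ⟨h1x, h2x, hhead, hlast, h5x⟩ := hp
      simp only [List.head_cons, List.getLast_singleton] at hhead hlast
      rw [hlast, hv] at hhead
      cases hhead
    obtain ⟨j, hj, hE, hvip, hplen⟩ := decomp (x := x) hp hdne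
    have hrc : redCount color [v] = 0 := by simp [redCount, hv]
    rw [hrc] at hj
    have hj' : j = i := by omega
    rw [hj'] at hvip
    have hlen' : p.dropLast.length ≤ n := by
      have h1 := List.length_dropLast (xs := p)
      have h2 : 0 < p.length := List.length_pos_iff.mpr hne
      omega
    rcases hcu : color (p.dropLast.getLast hdne) with hw | hb | hr
    · exact absurd hvip (not_VIPath_white hwhite hcu)
    · have h1 := ih (p.dropLast.getLast hdne) hcu p.dropLast hlen' hvip
      rw [hplen]
      calc (⨅ u : {u : V // color u = Color.red},
              (fval E color x (u : V) i + deltaW E color x (u : V) v))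
          ≤ ⨅ u : {u : V // color u = Color.red},
              ((fval E color x (u : V) i
                + deltaW E color x (u : V) (p.dropLast.getLast hdne))
                + x (p.dropLast.getLast hdne)) := by
            refine le_iInf fun u => ?_
            refine iInf_le_of_le u ?_
            calc fval E color x (u : V) i + deltaW E color x (u : V) v
                ≤ fval E color x (u : V) i
                  + (deltaW E color x (u : V) (p.dropLast.getLast hdne)
                    + x (p.dropLast.getLast hdne)) :=
                  add_le_add_right (deltaW_step hE hcu) _
              _ = _ := (add_assoc _ _ _).symm
        _ = (⨅ u : {u : V // color u = Color.red},
              (fval E color x (u : V) i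
                + deltaW E color x (u : V) (p.dropLast.getLast hdne)))
              + x (p.dropLast.getLast hdne) := (ENNReal.iInf_add).symm
        _ ≤ plen x p.dropLast + x (p.dropLast.getLast hdne) := add_le_add_left h1 _
    · calc (⨅ u : {u : V // color u = Color.red},
              (fval E color x (u : V) i + deltaW E color x (u : V) v))
          ≤ fval E color x (p.dropLast.getLast hdne) i
            + deltaW E color x (p.dropLast.getLast hdne) v :=
            iInf_le _ (⟨p.dropLast.getLast hdne, hcu⟩ : {u : V // color u = Color.red})
        _ ≤ plen x p.dropLast + x (p.dropLast.getLast hdne) :=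
            add_le_add (fval_le hvip) (deltaW_le_x hE)
        _ = plen x p := hplen.symm

lemma fval_blue (hwhite : ∀ v u : V, color v = Color.white → ¬ E u v)
    {v : V} {i : ℕ} (hv : color v = Color.blue) :
    fval E color x v i =
      ⨅ u : {u : V // color u = Color.red},
        (fval E color x (u : V) i + deltaW E color x (u : V) v) := by
  apply le_antisymm
  · refine le_iInf ?_
    rintro ⟨u, hu⟩
    conv_rhs => rw [fval]
    apply aux_le_sInf_add
    rintro a ⟨q, hq, rfl⟩
    conv_rhs => rw [deltaW_eq]
    apply aux_le_add_sInf
    rintro b ⟨r, hr, rfl⟩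
    obtain ⟨hvip, hplen⟩ := compose_delta (x := x) hq hr hv
    rw [← hplen]
    exact fval_le hvip
  · refine le_sInf ?_
    rintro a ⟨p, hp, rfl⟩
    exact blue_ge hwhite p.length v hv p le_rfl hp

end Stmt8Aux

/-- correctness of the dynamic programming recurrence for `f_i(v)`:
`f_1(v)` is `∞` for white `v`, `0` for red `v`, and `min_{u red} δ(u,v)` for blue `v`;
for `2 ≤ i ≤ L+1`, `f_i(v)` is `∞` for white `v`, `min_{(u,v) ∈ E} (f_{i−1}(u) + x_u)` for
red `v`, and `min_{u red} (f_i(u) + δ(u,v))` for blue `v`. -/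
theorem stmt8 (E : V → V → Prop) (color : V → Color) (L : ℕ) (hL : 1 ≤ L)
    (x : V → ℝ≥0∞)
    (hwhite : ∀ v u : V, color v = Color.white → ¬ E u v) :
    ∀ v : V,
      (fval E color x v 1 =
        if color v = Color.white then ⊤
        else if color v = Color.red then 0
        else ⨅ u : {u : V // color u = Color.red}, deltaW E color x u v) ∧
      (∀ i : ℕ, 2 ≤ i → i ≤ L + 1 →
        fval E color x v i =
          if color v = Color.white then ⊤
          else if color v = Color.red then
            ⨅ u : {u : V // E u v}, (fval E color x u (i - 1) + x (u : V))
          else ⨅ u : {u : V // color u = Color.red},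
            (fval E color x u i + deltaW E color x u v)) := by
  intro v
  constructor
  · rcases hc : color v with hw | hb | hr
    · rw [if_pos rfl]
      exact fval_white hwhite hc
    · rw [if_neg (by simp), if_neg (by simp)]
      rw [fval_blue hwhite hc]
      refine iInf_congr ?_
      rintro ⟨u, hu⟩
      rw [fval_red_one hu, zero_add]
    · rw [if_neg (by simp), if_pos rfl]
      exact fval_red_one hc
  · intro i h2 hL'
    rcases hc : color v with hw | hb | hr
    · rw [if_pos rfl]
      exact fval_white hwhite hc
    · rw [if_neg (by simp), if_neg (by simp)]
      exact fval_blue hwhite hc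
    · rw [if_neg (by simp), if_pos rfl]
      exact fval_red hwhite hc h2
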